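/- Let 2 ≤ k ≤ n. If there exist r mutually orthogonal k × n Latin rectangles, then M(n, k, k−1) ≥ rn; that is, there exists a set Γ ⊆ S_{k,n} of size rn such that any two distinct elements of Γ have Hamming distance at least k − 1. -/
import Mathlib


open scoped Classical

/-- The Hamming distance between two injections `σ, τ : [k] ↪ [n]`:
the number of positions `i ∈ [k]` with `σ(i) ≠ τ(i)`. -/
noncomputable def hamDist {k n : ℕ} (σ τ : Fin k ↪ Fin n) : ℕ :=
  (Finset.univ.filter fun i => σ i ≠ τ i).card

/-- `L : [k] × [n] → [n]` is a `k × n` Latin rectangle: every row is a permutation of `[n]`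
and the entries in each column are pairwise distinct. -/
def IsLatinRect {k n : ℕ} (L : Fin k → Fin n → Fin n) : Prop :=
  (∀ i, Function.Bijective (L i)) ∧ ∀ j, ∀ i i' : Fin k, i ≠ i' → L i j ≠ L i' j

/-- Two `k × n` Latin rectangles are orthogonal: `(i,j) ↦ (L(i,j), L'(i,j))` is injective. -/
def OrthogLatinRect {k n : ℕ} (L L' : Fin k → Fin n → Fin n) : Prop :=
  Function.Injective fun p : Fin k × Fin n => (L p.1 p.2, L' p.1 p.2)

/-- If there exist `r` mutually orthogonal `k × n` Latin rectangles (`2 ≤ k ≤ n`), then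
`M(n, k, k−1) ≥ rn`: there is a set `Γ ⊆ S_{k,n}` of size `r·n` whose distinct elements
have pairwise Hamming distance at least `k − 1`. -/
theorem stmt_15 (k n r : ℕ) (hk : 2 ≤ k) (hkn : k ≤ n)
    (L : Fin r → Fin k → Fin n → Fin n)
    (hL : ∀ a, IsLatinRect (L a))
    (horth : ∀ a b, a ≠ b → OrthogLatinRect (L a) (L b)) :
    ∃ Γ : Finset (Fin k ↪ Fin n), Γ.card = r * n ∧
      ∀ σ ∈ Γ, ∀ τ ∈ Γ, σ ≠ τ → k - 1 ≤ hamDist σ τ := by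
  -- each row of each rectangle is an equivalence
  let e : Fin r → Fin k → (Fin n ≃ Fin n) := fun a i =>
    Equiv.ofBijective (L a i) ((hL a).1 i)
  have happ : ∀ a i (j : Fin n), L a i ((e a i).symm j) = j := fun a i j =>
    (e a i).apply_symm_apply j
  -- the codewords
  have hinj : ∀ (a : Fin r) (j : Fin n),
      Function.Injective fun i : Fin k => (e a i).symm j := by
    intro a j i i' h
    by_contra hne
    have h' : (e a i).symm j = (e a i').symm j := h
    have t1 : L a i ((e a i').symm j) = j := by rw [← h']; exact happ a i j
    exact (hL a).2 ((e a i').symm j) i i' hne (t1.trans (happ a i' j).symm)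
  let F : Fin r × Fin n → (Fin k ↪ Fin n) := fun p =>
    ⟨fun i => (e p.1 i).symm p.2, hinj p.1 p.2⟩
  -- key separation lemma: two agreements force equal parameters
  have hsep : ∀ (a b : Fin r) (j j' : Fin n) (i i' : Fin k), i ≠ i' →
      (e a i).symm j = (e b i).symm j' → (e a i').symm j = (e b i').symm j' →
      a = b ∧ j = j' := by
    intro a b j j' i i' hii h1 h2
    by_cases hab : a = b
    · subst hab
      exact ⟨rfl, by simpa using congrArg (e a i) h1⟩
    · exfalso
      have key : ((i : Fin k), (e a i).symm j) = (i', (e a i').symm j) := by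
        apply horth a b hab
        simp only
        rw [happ a i j, happ a i' j, h1, h2, happ b i j', happ b i' j']
      exact hii (congrArg Prod.fst key)
  -- F is injective
  have hFinj : Function.Injective F := by
    intro p q hpq
    have h0 : ∀ i : Fin k, (e p.1 i).symm p.2 = (e q.1 i).symm q.2 := by
      intro i
      exact congrFun (congrArg (fun f : Fin k ↪ Fin n => (f : Fin k → Fin n)) hpq) i
    have h01 : (⟨0, by omega⟩ : Fin k) ≠ ⟨1, by omega⟩ := by
      simp [Fin.ext_iff]
    obtain ⟨hab, hjj⟩ := hsep p.1 q.1 p.2 q.2 ⟨0, by omega⟩ ⟨1, by omega⟩ h01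
      (h0 _) (h0 _)
    exact Prod.ext hab hjj
  refine ⟨Finset.image F Finset.univ, ?_, ?_⟩
  · rw [Finset.card_image_of_injective _ hFinj, Finset.card_univ]
    simp
  · intro σ hσ τ hτ hst
    simp only [Finset.mem_image, Finset.mem_univ, true_and] at hσ hτ
    obtain ⟨⟨a, j⟩, rfl⟩ := hσ
    obtain ⟨⟨b, j'⟩, rfl⟩ := hτ
    have hagree : (Finset.univ.filter fun i : Fin k =>
        F (a, j) i = F (b, j') i).card ≤ 1 := by
      apply Finset.card_le_one.2
      intro i hi i' hi'
      simp only [Finset.mem_filter] at hi hi'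
      by_contra hne
      obtain ⟨hab, hjj⟩ := hsep a b j j' i i' hne hi.2 hi'.2
      exact hst (by rw [hab, hjj])
    have htot := Finset.card_filter_add_card_filter_not
      (s := (Finset.univ : Finset (Fin k))) (p := fun i => F (a, j) i = F (b, j') i)
    rw [Finset.card_univ, Fintype.card_fin] at htot
    simp only [hamDist, ne_eq]
    omega
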